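/- Let m_B, m_E be positive integers, K_{B,1}, K_{B,2}, K_{E,1}, K_{E,2} > 0, ρ_{E,1}, ρ_{E,2} > 0, c₁, c₂ > 0 real, and p_B, p_E ∈ [0,1]. For s > 0, let f_B^{(s)} and F_B^{(s)} be the ARS PDF and CDF with parameters (p_B, m_B, K_{B,1}, K_{B,2}, c₁·s, c₂·s), and let f_E^{ARS}, F_E^{ARS} be the ARS PDF and CDF with parameters (p_E, m_E, K_{E,1}, K_{E,2}, ρ_{E,1}, ρ_{E,2}). Define the average secrecy capacity C̄_s(s) = I₁(s) + I₂(s) − I₃, where I₁(s) = ∫₀^∞ ln(1+γ)·f_B^{(s)}(γ)·F_E^{ARS}(γ) dγ, I₂(s) = ∫₀^∞ ln(1+γ)·f_E^{ARS}(γ)·F_B^{(s)}(γ) dγ, and I₃ = ∫₀^∞ ln(1+γ)·f_E^{ARS}(γ) dγ. Then the high-SNR slope satisfies lim_{s→∞} C̄_s(s) / log₂(s) = ln 2. -/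

import Mathlib

open MeasureTheory Filter Finset Real

/-- Coefficients `B_n(m,K)` of the integer-parameter Rician shadowed model. -/
noncomputable def Bcoef (m : ℕ) (K : ℝ) (n : ℕ) : ℝ :=
  ((m - 1).choose n : ℝ) * ((m : ℝ) / (K + m)) ^ n * (K / (K + m)) ^ (m - 1 - n)

/-- Integer-parameter Rician shadowed PDF with parameters `(m, K, ρ)`. -/
noncomputable def rsPDF (m : ℕ) (K ρ : ℝ) (γ : ℝ) : ℝ :=
  ∑ n ∈ Finset.range m,
    Bcoef m K n * γ ^ (m - n - 1) * Real.exp (-γ / ρ) /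
      (ρ ^ (m - n) * ((m - n - 1).factorial : ℝ))

/-- Integer-parameter Rician shadowed CDF with parameters `(m, K, ρ)`. -/
noncomputable def rsCDF (m : ℕ) (K ρ : ℝ) (γ : ℝ) : ℝ :=
  ∑ j ∈ Finset.range m,
    Bcoef m K j *
      (1 - Real.exp (-γ / ρ) *
        ∑ k ∈ Finset.range (m - j), γ ^ k / (ρ ^ k * (k.factorial : ℝ)))

/-- Alternate Rician Shadowed (ARS) PDF with parameters `(p, m, K₁, K₂, ρ₁, ρ₂)`. -/
noncomputable def arsPDF (p : ℝ) (m : ℕ) (K₁ K₂ ρ₁ ρ₂ : ℝ) (γ : ℝ) : ℝ :=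
  p * rsPDF m K₁ ρ₁ γ + (1 - p) * rsPDF m K₂ ρ₂ γ

/-- Alternate Rician Shadowed (ARS) CDF with parameters `(p, m, K₁, K₂, ρ₁, ρ₂)`. -/
noncomputable def arsCDF (p : ℝ) (m : ℕ) (K₁ K₂ ρ₁ ρ₂ : ℝ) (γ : ℝ) : ℝ :=
  p * rsCDF m K₁ ρ₁ γ + (1 - p) * rsCDF m K₂ ρ₂ γ

lemma Bcoef_nonneg (m : ℕ) {K : ℝ} (hK : 0 < K) (n : ℕ) : 0 ≤ Bcoef m K n := by
  have h : (0:ℝ) < K + m := by positivity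
  unfold Bcoef
  positivity

lemma sum_Bcoef {m : ℕ} (hm : 0 < m) {K : ℝ} (hK : 0 < K) :
    ∑ n ∈ Finset.range m, Bcoef m K n = 1 := by
  have hKm : K + (m:ℝ) ≠ 0 := by positivity
  have hx : (m:ℝ)/(K+m) + K/(K+m) = 1 := by field_simp; ring
  calc ∑ n ∈ Finset.range m, Bcoef m K n
      = ∑ n ∈ Finset.range ((m-1)+1),
          ((m:ℝ)/(K+m))^n * (K/(K+m))^(m-1-n) * ((m-1).choose n : ℝ) := by
        rw [Nat.sub_add_cancel hm]
        exact Finset.sum_congr rfl (fun n _ => by unfold Bcoef; ring)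
    _ = ((m:ℝ)/(K+m) + K/(K+m))^(m-1) := (add_pow _ _ _).symm
    _ = 1 := by rw [hx, one_pow]

lemma expsum_nonneg {x ρ : ℝ} (hx : 0 ≤ x) (hρ : 0 < ρ) (N : ℕ) :
    0 ≤ Real.exp (-x / ρ) * ∑ k ∈ Finset.range N, x ^ k / (ρ ^ k * (k.factorial : ℝ)) := by
  have h : 0 ≤ ∑ k ∈ Finset.range N, x ^ k / (ρ ^ k * (k.factorial : ℝ)) := by
    refine Finset.sum_nonneg fun k _ => ?_
    have : (0:ℝ) < (k.factorial : ℝ) := by exact_mod_cast k.factorial_pos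
    positivity
  positivity

lemma expsum_le_one {x ρ : ℝ} (hx : 0 ≤ x) (hρ : 0 < ρ) (N : ℕ) :
    Real.exp (-x / ρ) * ∑ k ∈ Finset.range N, x ^ k / (ρ ^ k * (k.factorial : ℝ)) ≤ 1 := by
  have hxρ : 0 ≤ x / ρ := by positivity
  have hsum : ∑ k ∈ Finset.range N, x ^ k / (ρ ^ k * (k.factorial : ℝ))
      = ∑ k ∈ Finset.range N, (x/ρ) ^ k / (k.factorial : ℝ) := by
    refine Finset.sum_congr rfl fun k _ => ?_
    rw [div_pow, div_div]
  calc Real.exp (-x / ρ) * ∑ k ∈ Finset.range N, x ^ k / (ρ ^ k * (k.factorial : ℝ))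
      ≤ Real.exp (-x / ρ) * Real.exp (x / ρ) := by
        rw [hsum]
        exact mul_le_mul_of_nonneg_left (Real.sum_le_exp_of_nonneg hxρ N)
          (Real.exp_pos _).le
    _ = 1 := by rw [← Real.exp_add, neg_div, neg_add_cancel, Real.exp_zero]

lemma rsCDF_nonneg {m : ℕ} {K ρ γ : ℝ} (hK : 0 < K) (hρ : 0 < ρ) (hγ : 0 ≤ γ) :
    0 ≤ rsCDF m K ρ γ := by
  refine Finset.sum_nonneg fun j _ => mul_nonneg (Bcoef_nonneg m hK j) ?_
  have := expsum_le_one hγ hρ (m - j) (x := γ)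
  linarith

lemma rsCDF_le_one {m : ℕ} (hm : 0 < m) {K ρ γ : ℝ} (hK : 0 < K) (hρ : 0 < ρ) (hγ : 0 ≤ γ) :
    rsCDF m K ρ γ ≤ 1 := by
  calc rsCDF m K ρ γ ≤ ∑ j ∈ Finset.range m, Bcoef m K j := by
        refine Finset.sum_le_sum fun j _ => ?_
        have h0 := expsum_nonneg hγ hρ (m - j) (x := γ)
        have hb := Bcoef_nonneg m hK j
        nlinarith
    _ = 1 := sum_Bcoef hm hK

lemma rsPDF_nonneg {m : ℕ} {K ρ γ : ℝ} (hK : 0 < K) (hρ : 0 < ρ) (hγ : 0 ≤ γ) :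
    0 ≤ rsPDF m K ρ γ := by
  refine Finset.sum_nonneg fun n _ => ?_
  have hb := Bcoef_nonneg m hK n
  have hf : (0:ℝ) < ((m - n - 1).factorial : ℝ) := by exact_mod_cast (m - n - 1).factorial_pos
  positivity

lemma rsCDF_tendsto_one {m : ℕ} (hm : 0 < m) {K ρ : ℝ} (hK : 0 < K) (hρ : 0 < ρ) :
    Tendsto (fun γ => rsCDF m K ρ γ) atTop (nhds 1) := by
  have hterm : ∀ N : ℕ, Tendsto (fun γ =>
      Real.exp (-γ / ρ) * ∑ k ∈ Finset.range N, γ ^ k / (ρ ^ k * (k.factorial : ℝ)))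
      atTop (nhds 0) := by
    intro N
    have heq : ∀ γ : ℝ, Real.exp (-γ / ρ) * ∑ k ∈ Finset.range N, γ ^ k / (ρ ^ k * (k.factorial : ℝ))
        = ∑ k ∈ Finset.range N, ((γ/ρ) ^ k * Real.exp (-(γ/ρ))) / (k.factorial : ℝ) := by
      intro γ
      rw [Finset.mul_sum]
      refine Finset.sum_congr rfl fun k _ => ?_
      rw [div_pow, neg_div]
      ring
    simp only [heq]
    have : Tendsto (fun γ : ℝ => γ / ρ) atTop atTop := tendsto_id.atTop_div_const hρ
    have hsum : Tendsto (fun γ : ℝ => ∑ k ∈ Finset.range N,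
        ((γ/ρ) ^ k * Real.exp (-(γ/ρ))) / (k.factorial : ℝ)) atTop
        (nhds (∑ k ∈ Finset.range N, 0)) := by
      refine tendsto_finset_sum _ fun k _ => ?_
      have h0 := (tendsto_pow_mul_exp_neg_atTop_nhds_zero k).comp this
      have := h0.div_const (k.factorial : ℝ)
      simpa using this
    simpa using hsum
  have h := tendsto_finset_sum (Finset.range m) (f := fun j (γ:ℝ) =>
      Bcoef m K j * (1 - Real.exp (-γ / ρ) *
        ∑ k ∈ Finset.range (m - j), γ ^ k / (ρ ^ k * (k.factorial : ℝ))))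
    (fun j _ => by
      have := ((hterm (m - j)).const_mul (Bcoef m K j))
      have h2 : Tendsto (fun γ : ℝ => Bcoef m K j * (1 - Real.exp (-γ / ρ) *
          ∑ k ∈ Finset.range (m - j), γ ^ k / (ρ ^ k * (k.factorial : ℝ)))) atTop
          (nhds (Bcoef m K j * (1 - 0))) := by
        exact (tendsto_const_nhds.sub (hterm (m - j))).const_mul _
      simpa using h2)
  rw [sum_Bcoef hm hK] at h
  exact h

lemma integrableOn_pow_mul_exp {ρ : ℝ} (hρ : 0 < ρ) (k : ℕ) :
    IntegrableOn (fun γ : ℝ => γ ^ k * Real.exp (-γ / ρ)) (Set.Ioi 0) := by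
  have h : IntegrableOn (fun x : ℝ => Real.exp (-x) * x ^ ((k:ℝ) + 1 - 1)) (Set.Ioi 0) :=
    Real.GammaIntegral_convergent (by positivity)
  have h2 : IntegrableOn (fun x : ℝ =>
      Real.exp (-(ρ⁻¹ * x)) * (ρ⁻¹ * x) ^ ((k:ℝ) + 1 - 1)) (Set.Ioi 0) := by
    have hiff := integrableOn_Ioi_comp_mul_left_iff
      (fun x : ℝ => Real.exp (-x) * x ^ ((k:ℝ) + 1 - 1)) 0 (inv_pos.2 hρ)
    rw [mul_zero] at hiff
    exact hiff.2 h
  have h3 : IntegrableOn (fun x : ℝ =>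
      ρ ^ k * (Real.exp (-(ρ⁻¹ * x)) * (ρ⁻¹ * x) ^ ((k:ℝ) + 1 - 1))) (Set.Ioi 0) :=
    h2.const_mul (ρ ^ k)
  refine IntegrableOn.congr_fun h3 (fun x hx => ?_) measurableSet_Ioi
  have hx0 : (0:ℝ) < x := hx
  have hsimp : ((k:ℝ) + 1 - 1) = (k:ℝ) := by ring
  rw [hsimp, Real.rpow_natCast]
  have hexp : -(ρ⁻¹ * x) = -x / ρ := by field_simp
  rw [hexp]
  field_simp
  rw [div_pow, mul_div_cancel₀ _ (pow_ne_zero _ hρ.ne')]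

lemma integrableOn_base {ρ : ℝ} (hρ : 0 < ρ) (a : ℕ) (D : ℝ) {H : ℝ → ℝ}
    (hHm : Measurable H) (hH : ∀ x : ℝ, 0 < x → |H x| ≤ 1) :
    IntegrableOn (fun γ : ℝ =>
      Real.log (1 + γ) * (γ ^ a * Real.exp (-γ / ρ) / D) * H γ) (Set.Ioi 0) := by
  have hmeas : AEStronglyMeasurable (fun γ : ℝ =>
      Real.log (1 + γ) * (γ ^ a * Real.exp (-γ / ρ) / D) * H γ)
      (volume.restrict (Set.Ioi 0)) := by
    apply Measurable.aestronglyMeasurable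
    exact (((Real.measurable_log.comp (measurable_const.add measurable_id)).mul
      (((measurable_id.pow_const a).mul
        ((measurable_id.neg.div_const ρ).exp)).div_const D)).mul hHm)
  refine Integrable.mono' ((integrableOn_pow_mul_exp hρ (a+1)).const_mul |D|⁻¹) hmeas ?_
  refine (ae_restrict_iff' measurableSet_Ioi).2 (Filter.Eventually.of_forall fun x hx => ?_)
  have hx0 : (0:ℝ) < x := hx
  have hlog0 : 0 ≤ Real.log (1 + x) := Real.log_nonneg (by linarith)
  have hlog : Real.log (1 + x) ≤ x := by
    have := Real.log_le_sub_one_of_pos (show (0:ℝ) < 1 + x by linarith)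
    linarith
  have hHx := hH x hx0
  rw [Real.norm_eq_abs, abs_mul, abs_mul]
  have h1 : |Real.log (1 + x)| = Real.log (1 + x) := abs_of_nonneg hlog0
  rw [h1]
  have h2 : |x ^ a * Real.exp (-x / ρ) / D| = x ^ a * Real.exp (-x / ρ) * |D|⁻¹ := by
    rw [abs_div, abs_of_nonneg (by positivity : (0:ℝ) ≤ x ^ a * Real.exp (-x / ρ)),
      div_eq_mul_inv]
  rw [h2]
  calc Real.log (1 + x) * (x ^ a * Real.exp (-x / ρ) * |D|⁻¹) * |H x|
      ≤ x * (x ^ a * Real.exp (-x / ρ) * |D|⁻¹) * 1 := by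
        refine mul_le_mul (mul_le_mul_of_nonneg_right hlog (by positivity)) hHx
          (abs_nonneg _) (by positivity)
    _ = |D|⁻¹ * (x ^ (a+1) * Real.exp (-x / ρ)) := by ring

lemma log_ratio_tendsto {b : ℝ} (hb : 0 < b) :
    Tendsto (fun s : ℝ => Real.log (1 + b * s) / Real.log s) atTop (nhds 1) := by
  have hfrac : Tendsto (fun s : ℝ => (1 + b * s) / s) atTop (nhds b) := by
    have heq : (fun s : ℝ => (1 + b * s) / s) =ᶠ[atTop] fun s => 1 / s + b := by
      filter_upwards [eventually_gt_atTop (0:ℝ)] with s hs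
      field_simp
    rw [tendsto_congr' heq]
    have h1 : Tendsto (fun s : ℝ => 1 / s) atTop (nhds 0) := by
      simpa [one_div] using (tendsto_inv_atTop_zero (𝕜 := ℝ))
    simpa using h1.add tendsto_const_nhds
  have h1 : Tendsto (fun s : ℝ => Real.log ((1 + b * s) / s)) atTop (nhds (Real.log b)) :=
    ((Real.continuousAt_log hb.ne').tendsto).comp hfrac
  have h2 : Tendsto (fun s : ℝ => Real.log ((1 + b * s) / s) / Real.log s) atTop (nhds 0) :=
    h1.div_atTop Real.tendsto_log_atTop
  have h3 : (fun s : ℝ => Real.log ((1 + b * s) / s) / Real.log s + 1)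
      =ᶠ[atTop] fun s => Real.log (1 + b * s) / Real.log s := by
    filter_upwards [eventually_gt_atTop (1:ℝ)] with s hs
    have hs0 : (0:ℝ) < s := lt_trans one_pos hs
    have hlogs : Real.log s ≠ 0 := ne_of_gt (Real.log_pos hs)
    have hnum : (0:ℝ) < 1 + b * s := by positivity
    rw [Real.log_div hnum.ne' hs0.ne']
    field_simp
    ring
  have h4 : Tendsto (fun s : ℝ => Real.log ((1 + b * s) / s) / Real.log s + 1)
      atTop (nhds 1) := by simpa using h2.add tendsto_const_nhds
  exact Tendsto.congr' h3 h4

lemma integral_gauss_limit (a : ℕ) :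
    ∫ u in Set.Ioi (0:ℝ), u ^ a * Real.exp (-u) / (a.factorial : ℝ) = 1 := by
  have hfact : ((a.factorial : ℝ)) ≠ 0 := by exact_mod_cast a.factorial_ne_zero
  rw [MeasureTheory.integral_div]
  have h := Real.Gamma_eq_integral (s := (a:ℝ) + 1) (by positivity)
  have h2 : ∫ x in Set.Ioi (0:ℝ), Real.exp (-x) * x ^ ((a:ℝ) + 1 - 1)
      = ∫ x in Set.Ioi (0:ℝ), x ^ a * Real.exp (-x) := by
    refine setIntegral_congr_fun measurableSet_Ioi fun x hx => ?_
    have hsimp : ((a:ℝ) + 1 - 1) = (a:ℝ) := by ring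
    rw [hsimp, Real.rpow_natCast]
    ring
  rw [h2] at h
  rw [← h, Real.Gamma_nat_eq_factorial, div_self hfact]

lemma key_tendsto (a : ℕ) {c : ℝ} (hc : 0 < c) {G : ℝ → ℝ} (hGm : Measurable G)
    (hG0 : ∀ x : ℝ, 0 < x → 0 ≤ G x) (hG1 : ∀ x : ℝ, 0 < x → G x ≤ 1)
    (hGlim : Tendsto G atTop (nhds 1)) :
    Tendsto (fun s : ℝ => (∫ γ in Set.Ioi (0:ℝ),
        Real.log (1 + γ) * (γ ^ a * Real.exp (-γ / (c * s)) /
          ((c * s) ^ (a + 1) * (a.factorial : ℝ))) * G γ)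
        / Real.log s) atTop (nhds 1) := by
  have hfact : ((a.factorial : ℝ)) ≠ 0 := by exact_mod_cast a.factorial_ne_zero
  set F : ℝ → ℝ → ℝ := fun s u =>
    Real.log (1 + c * u * s) / Real.log s * (u ^ a * Real.exp (-u) / (a.factorial : ℝ)) *
      G (c * u * s) with hF
  -- Step 1 : change of variables
  have E : ∀ s : ℝ, 1 < s → (∫ γ in Set.Ioi (0:ℝ),
      Real.log (1 + γ) * (γ ^ a * Real.exp (-γ / (c * s)) /
        ((c * s) ^ (a + 1) * (a.factorial : ℝ))) * G γ) / Real.log s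
      = ∫ u in Set.Ioi (0:ℝ), F s u := by
    intro s hs
    have hs0 : (0:ℝ) < s := lt_trans one_pos hs
    have hb : (0:ℝ) < c * s := by positivity
    have hlogs : Real.log s ≠ 0 := ne_of_gt (Real.log_pos hs)
    set h : ℝ → ℝ := fun γ =>
      Real.log (1 + γ) * (γ ^ a * Real.exp (-γ / (c * s)) /
        ((c * s) ^ (a + 1) * (a.factorial : ℝ))) * G γ with hh
    have hcv := MeasureTheory.integral_comp_mul_left_Ioi h 0 hb
    rw [mul_zero, smul_eq_mul] at hcv
    have hX : ∫ γ in Set.Ioi (0:ℝ), h γ = ∫ u in Set.Ioi (0:ℝ), (c * s) * h ((c * s) * u) := by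
      rw [MeasureTheory.integral_const_mul, hcv, ← mul_assoc, mul_inv_cancel₀ hb.ne', one_mul]
    rw [hX, ← MeasureTheory.integral_div]
    refine setIntegral_congr_fun measurableSet_Ioi fun u hu => ?_
    have hu0 : (0:ℝ) < u := hu
    simp only [hh, hF]
    have hexp : -(c * s * u) / (c * s) = -u := by
      field_simp
    have harg : c * s * u = c * u * s := by ring
    rw [hexp, harg]
    field_simp
    all_goals ring
  -- Step 2 : dominated convergence
  have hDCT : Tendsto (fun s : ℝ => ∫ u in Set.Ioi (0:ℝ), F s u) atTop
      (nhds (∫ u in Set.Ioi (0:ℝ), u ^ a * Real.exp (-u) / (a.factorial : ℝ))) := by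
    refine MeasureTheory.tendsto_integral_filter_of_dominated_convergence
      (fun u => (Real.log (1 + c * u) + 2) * (u ^ a * Real.exp (-u) / (a.factorial : ℝ)))
      ?_ ?_ ?_ ?_
    · refine Filter.Eventually.of_forall fun s => ?_
      have m1 : Measurable fun u : ℝ => c * u * s :=
        (measurable_id.const_mul c).mul_const s
      exact ((((Real.measurable_log.comp (measurable_const.add m1)).div_const
        (Real.log s)).mul (((measurable_id.pow_const a).mul
          (measurable_id.neg.exp)).div_const _)).mul (hGm.comp m1)).aestronglyMeasurable
    · filter_upwards [eventually_ge_atTop (3:ℝ)] with s hs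
      refine (ae_restrict_iff' measurableSet_Ioi).2 (Filter.Eventually.of_forall fun u hu => ?_)
      have hu0 : (0:ℝ) < u := hu
      have hs0 : (0:ℝ) < s := by linarith
      have hs1 : (1:ℝ) < s := by linarith
      have hlogs1 : 1 ≤ Real.log s := by
        rw [Real.le_log_iff_exp_le hs0]
        calc Real.exp 1 ≤ 2.7182818286 := Real.exp_one_lt_d9.le
          _ ≤ 3 := by norm_num
          _ ≤ s := hs
      have hlogs0 : (0:ℝ) < Real.log s := by linarith
      have hcu : (0:ℝ) < c * u := by positivity
      have hy : (0:ℝ) < c * u * s := by positivity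
      have hlogcu : 0 ≤ Real.log (1 + c * u) := Real.log_nonneg (by linarith)
      have hlogy0 : 0 ≤ Real.log (1 + c * u * s) := Real.log_nonneg (by nlinarith)
      have hlog2 : Real.log 2 ≤ 1 := by
        rw [Real.log_le_iff_le_exp (by norm_num)]
        linarith [Real.add_one_le_exp (1:ℝ)]
      have hlogle : Real.log (1 + c * u * s) ≤ Real.log (1 + c * u) + 2 * Real.log s := by
        have h1 : (1 + c * u * s) ≤ (1 + c * u) * (1 + s) := by nlinarith
        have h1s : (0:ℝ) < 1 + s := by linarith
        have hcu1 : (0:ℝ) < 1 + c * u := by linarith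
        calc Real.log (1 + c * u * s) ≤ Real.log ((1 + c * u) * (1 + s)) :=
              Real.log_le_log (by positivity) h1
          _ = Real.log (1 + c * u) + Real.log (1 + s) :=
              Real.log_mul hcu1.ne' h1s.ne'
          _ ≤ Real.log (1 + c * u) + 2 * Real.log s := by
              have h2s : Real.log (1 + s) ≤ Real.log (2 * s) :=
                Real.log_le_log (by positivity) (by linarith)
              rw [Real.log_mul (by norm_num) hs0.ne'] at h2s
              linarith
      have hR : Real.log (1 + c * u * s) / Real.log s ≤ Real.log (1 + c * u) + 2 := by
        rw [div_le_iff₀ hlogs0]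
        nlinarith
      have hGy0 := hG0 _ hy
      have hGy1 := hG1 _ hy
      have hP : (0:ℝ) ≤ u ^ a * Real.exp (-u) / (a.factorial : ℝ) := by positivity
      have hFnn : 0 ≤ F s u := by
        simp only [hF]
        have : 0 ≤ Real.log (1 + c * u * s) / Real.log s := by positivity
        positivity
      rw [Real.norm_eq_abs, abs_of_nonneg hFnn]
      simp only [hF]
      calc Real.log (1 + c * u * s) / Real.log s *
            (u ^ a * Real.exp (-u) / (a.factorial : ℝ)) * G (c * u * s)
          ≤ Real.log (1 + c * u * s) / Real.log s *
            (u ^ a * Real.exp (-u) / (a.factorial : ℝ)) * 1 := by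
            refine mul_le_mul_of_nonneg_left hGy1 ?_
            positivity
        _ = Real.log (1 + c * u * s) / Real.log s *
            (u ^ a * Real.exp (-u) / (a.factorial : ℝ)) := mul_one _
        _ ≤ (Real.log (1 + c * u) + 2) * (u ^ a * Real.exp (-u) / (a.factorial : ℝ)) :=
            mul_le_mul_of_nonneg_right hR hP
    · -- bound integrable
      have b1 : IntegrableOn (fun u : ℝ => u ^ (a+1) * Real.exp (-u)) (Set.Ioi 0) := by
        simpa using integrableOn_pow_mul_exp one_pos (a+1)
      have b2 : IntegrableOn (fun u : ℝ => u ^ a * Real.exp (-u)) (Set.Ioi 0) := by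
        simpa using integrableOn_pow_mul_exp one_pos a
      have hint : IntegrableOn (fun u : ℝ =>
          (c * (u ^ (a+1) * Real.exp (-u)) + 2 * (u ^ a * Real.exp (-u))) / (a.factorial : ℝ))
          (Set.Ioi 0) :=
        ((b1.const_mul c).add (b2.const_mul 2)).div_const _
      refine Integrable.mono' hint ?_ ?_
      · exact (((Real.measurable_log.comp (measurable_const.add
          (measurable_id.const_mul c))).add measurable_const).mul
          (((measurable_id.pow_const a).mul (measurable_id.neg.exp)).div_const _)).aestronglyMeasurable
      · refine (ae_restrict_iff' measurableSet_Ioi).2 (Filter.Eventually.of_forall fun u hu => ?_)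
        have hu0 : (0:ℝ) < u := hu
        have hlogcu0 : 0 ≤ Real.log (1 + c * u) := Real.log_nonneg (by nlinarith)
        have hlogcu : Real.log (1 + c * u) ≤ c * u := by
          have := Real.log_le_sub_one_of_pos (show (0:ℝ) < 1 + c * u by nlinarith)
          linarith
        have hP : (0:ℝ) ≤ u ^ a * Real.exp (-u) / (a.factorial : ℝ) := by positivity
        rw [Real.norm_eq_abs, abs_of_nonneg (by positivity)]
        calc (Real.log (1 + c * u) + 2) * (u ^ a * Real.exp (-u) / (a.factorial : ℝ))
            ≤ (c * u + 2) * (u ^ a * Real.exp (-u) / (a.factorial : ℝ)) :=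
              mul_le_mul_of_nonneg_right (by linarith) hP
          _ = (c * (u ^ (a+1) * Real.exp (-u)) + 2 * (u ^ a * Real.exp (-u))) / (a.factorial : ℝ) := by
              ring
    · refine (ae_restrict_iff' measurableSet_Ioi).2 (Filter.Eventually.of_forall fun u hu => ?_)
      have hu0 : (0:ℝ) < u := hu
      have hcu : (0:ℝ) < c * u := by positivity
      have hA := log_ratio_tendsto hcu
      have hmulTop : Tendsto (fun s : ℝ => c * u * s) atTop atTop := by
        simpa using Tendsto.const_mul_atTop hcu (tendsto_id (α := ℝ))
      have hB : Tendsto (fun s : ℝ => G (c * u * s)) atTop (nhds 1) := hGlim.comp hmulTop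
      have := (hA.mul (tendsto_const_nhds
        (x := u ^ a * Real.exp (-u) / (a.factorial : ℝ)))).mul hB
      simpa [hF] using this
  rw [integral_gauss_limit a] at hDCT
  refine Tendsto.congr' ?_ hDCT
  filter_upwards [eventually_gt_atTop (1:ℝ)] with s hs
  exact (E s hs).symm

lemma rsPDF_mul_eq (m : ℕ) (K ρ : ℝ) (H : ℝ → ℝ) (γ : ℝ) :
    Real.log (1 + γ) * rsPDF m K ρ γ * H γ
    = ∑ n ∈ Finset.range m, Bcoef m K n *
        (Real.log (1 + γ) * (γ ^ (m - n - 1) * Real.exp (-γ / ρ) /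
          (ρ ^ ((m - n - 1) + 1) * ((m - n - 1).factorial : ℝ))) * H γ) := by
  unfold rsPDF
  rw [Finset.mul_sum, Finset.sum_mul]
  refine Finset.sum_congr rfl fun n hn => ?_
  have hmn : m - n - 1 + 1 = m - n := by
    have := Finset.mem_range.1 hn; omega
  rw [hmn]
  ring

lemma integrableOn_log_rsPDF {m : ℕ} {K ρ : ℝ} (hρ : 0 < ρ) {H : ℝ → ℝ}
    (hHm : Measurable H) (hH : ∀ x : ℝ, 0 < x → |H x| ≤ 1) :
    IntegrableOn (fun γ : ℝ => Real.log (1 + γ) * rsPDF m K ρ γ * H γ) (Set.Ioi 0) := by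
  have heq : (fun γ : ℝ => Real.log (1 + γ) * rsPDF m K ρ γ * H γ)
      = fun γ => ∑ n ∈ Finset.range m, Bcoef m K n *
        (Real.log (1 + γ) * (γ ^ (m - n - 1) * Real.exp (-γ / ρ) /
          (ρ ^ ((m - n - 1) + 1) * ((m - n - 1).factorial : ℝ))) * H γ) :=
    funext fun γ => rsPDF_mul_eq m K ρ H γ
  rw [heq]
  exact integrable_finset_sum _ fun n _ =>
    (integrableOn_base hρ (m - n - 1) _ hHm hH).const_mul _

lemma integrableOn_log_arsPDF {p : ℝ} {m : ℕ} {K₁ K₂ ρ₁ ρ₂ : ℝ}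
    (hρ₁ : 0 < ρ₁) (hρ₂ : 0 < ρ₂) {H : ℝ → ℝ}
    (hHm : Measurable H) (hH : ∀ x : ℝ, 0 < x → |H x| ≤ 1) :
    IntegrableOn (fun γ : ℝ => Real.log (1 + γ) * arsPDF p m K₁ K₂ ρ₁ ρ₂ γ * H γ)
      (Set.Ioi 0) := by
  have heq : (fun γ : ℝ => Real.log (1 + γ) * arsPDF p m K₁ K₂ ρ₁ ρ₂ γ * H γ)
      = fun γ => p * (Real.log (1 + γ) * rsPDF m K₁ ρ₁ γ * H γ)
        + (1 - p) * (Real.log (1 + γ) * rsPDF m K₂ ρ₂ γ * H γ) :=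
    funext fun γ => by unfold arsPDF; ring
  rw [heq]
  exact ((integrableOn_log_rsPDF hρ₁ hHm hH).const_mul p).add
    ((integrableOn_log_rsPDF hρ₂ hHm hH).const_mul (1 - p))

lemma measurable_rsCDF (m : ℕ) (K ρ : ℝ) : Measurable (fun γ => rsCDF m K ρ γ) := by
  unfold rsCDF
  refine Finset.measurable_sum _ fun j _ => ?_
  refine Measurable.const_mul ?_ _
  refine measurable_const.sub ?_
  exact ((measurable_id.neg.div_const ρ).exp).mul
    (Finset.measurable_sum _ fun k _ => (measurable_id.pow_const k).div_const _)

lemma measurable_arsCDF (p : ℝ) (m : ℕ) (K₁ K₂ ρ₁ ρ₂ : ℝ) :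
    Measurable (fun γ => arsCDF p m K₁ K₂ ρ₁ ρ₂ γ) := by
  unfold arsCDF
  exact ((measurable_rsCDF m K₁ ρ₁).const_mul p).add
    ((measurable_rsCDF m K₂ ρ₂).const_mul (1 - p))

lemma arsCDF_nonneg {p : ℝ} {m : ℕ} {K₁ K₂ ρ₁ ρ₂ γ : ℝ} (hp0 : 0 ≤ p) (hp1 : p ≤ 1)
    (hK₁ : 0 < K₁) (hK₂ : 0 < K₂) (hρ₁ : 0 < ρ₁) (hρ₂ : 0 < ρ₂) (hγ : 0 ≤ γ) :
    0 ≤ arsCDF p m K₁ K₂ ρ₁ ρ₂ γ := by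
  have h1 := rsCDF_nonneg (m := m) hK₁ hρ₁ hγ
  have h2 := rsCDF_nonneg (m := m) hK₂ hρ₂ hγ
  unfold arsCDF
  nlinarith

lemma arsCDF_le_one {p : ℝ} {m : ℕ} (hm : 0 < m) {K₁ K₂ ρ₁ ρ₂ γ : ℝ} (hp0 : 0 ≤ p)
    (hp1 : p ≤ 1) (hK₁ : 0 < K₁) (hK₂ : 0 < K₂) (hρ₁ : 0 < ρ₁) (hρ₂ : 0 < ρ₂) (hγ : 0 ≤ γ) :
    arsCDF p m K₁ K₂ ρ₁ ρ₂ γ ≤ 1 := by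
  have h1 := rsCDF_le_one hm hK₁ hρ₁ hγ (γ := γ)
  have h2 := rsCDF_le_one hm hK₂ hρ₂ hγ (γ := γ)
  have h1' := rsCDF_nonneg (m := m) hK₁ hρ₁ hγ (γ := γ)
  have h2' := rsCDF_nonneg (m := m) hK₂ hρ₂ hγ (γ := γ)
  unfold arsCDF
  nlinarith

lemma arsPDF_nonneg {p : ℝ} {m : ℕ} {K₁ K₂ ρ₁ ρ₂ γ : ℝ} (hp0 : 0 ≤ p) (hp1 : p ≤ 1)
    (hK₁ : 0 < K₁) (hK₂ : 0 < K₂) (hρ₁ : 0 < ρ₁) (hρ₂ : 0 < ρ₂) (hγ : 0 ≤ γ) :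
    0 ≤ arsPDF p m K₁ K₂ ρ₁ ρ₂ γ := by
  have h1 := rsPDF_nonneg (m := m) hK₁ hρ₁ hγ
  have h2 := rsPDF_nonneg (m := m) hK₂ hρ₂ hγ
  unfold arsPDF
  nlinarith

lemma arsCDF_tendsto_one {p : ℝ} {m : ℕ} (hm : 0 < m) {K₁ K₂ ρ₁ ρ₂ : ℝ}
    (hK₁ : 0 < K₁) (hK₂ : 0 < K₂) (hρ₁ : 0 < ρ₁) (hρ₂ : 0 < ρ₂) :
    Tendsto (fun γ => arsCDF p m K₁ K₂ ρ₁ ρ₂ γ) atTop (nhds 1) := by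
  have h1 := (rsCDF_tendsto_one hm hK₁ hρ₁).const_mul p
  have h2 := (rsCDF_tendsto_one hm hK₂ hρ₂).const_mul (1 - p)
  have := h1.add h2
  have heq : p * 1 + (1 - p) * 1 = 1 := by ring
  rw [heq] at this
  exact this

/-- The high-SNR slope of the average secrecy capacity equals `ln 2`. -/
theorem asc_high_snr_slope (mB mE : ℕ) (hmB : 0 < mB) (hmE : 0 < mE)
    (KB1 KB2 KE1 KE2 : ℝ) (hKB1 : 0 < KB1) (hKB2 : 0 < KB2)
    (hKE1 : 0 < KE1) (hKE2 : 0 < KE2)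
    (ρE1 ρE2 c1 c2 : ℝ) (hρE1 : 0 < ρE1) (hρE2 : 0 < ρE2)
    (hc1 : 0 < c1) (hc2 : 0 < c2)
    (pB pE : ℝ) (hpB : pB ∈ Set.Icc (0 : ℝ) 1) (hpE : pE ∈ Set.Icc (0 : ℝ) 1) :
    let I₁ : ℝ → ℝ := fun s =>
      ∫ γ in Set.Ioi (0 : ℝ),
        Real.log (1 + γ) * arsPDF pB mB KB1 KB2 (c1 * s) (c2 * s) γ *
          arsCDF pE mE KE1 KE2 ρE1 ρE2 γ
    let I₂ : ℝ → ℝ := fun s =>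
      ∫ γ in Set.Ioi (0 : ℝ),
        Real.log (1 + γ) * arsPDF pE mE KE1 KE2 ρE1 ρE2 γ *
          arsCDF pB mB KB1 KB2 (c1 * s) (c2 * s) γ
    let I₃ : ℝ :=
      ∫ γ in Set.Ioi (0 : ℝ), Real.log (1 + γ) * arsPDF pE mE KE1 KE2 ρE1 ρE2 γ
    Filter.Tendsto
      (fun s : ℝ => (I₁ s + I₂ s - I₃) / Real.logb 2 s)
      Filter.atTop (nhds (Real.log 2)) := by
  intro I₁ I₂ I₃
  obtain ⟨hpB0, hpB1⟩ := hpB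
  obtain ⟨hpE0, hpE1⟩ := hpE
  set G : ℝ → ℝ := fun γ => arsCDF pE mE KE1 KE2 ρE1 ρE2 γ with hGdef
  have hGm : Measurable G := measurable_arsCDF pE mE KE1 KE2 ρE1 ρE2
  have hG0 : ∀ x : ℝ, 0 < x → 0 ≤ G x := fun x hx =>
    arsCDF_nonneg hpE0 hpE1 hKE1 hKE2 hρE1 hρE2 hx.le
  have hG1 : ∀ x : ℝ, 0 < x → G x ≤ 1 := fun x hx =>
    arsCDF_le_one hmE hpE0 hpE1 hKE1 hKE2 hρE1 hρE2 hx.le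
  have hGabs : ∀ x : ℝ, 0 < x → |G x| ≤ 1 := fun x hx =>
    abs_le.2 ⟨by linarith [hG0 x hx], hG1 x hx⟩
  have hGlim : Tendsto G atTop (nhds 1) :=
    arsCDF_tendsto_one hmE hKE1 hKE2 hρE1 hρE2
  -- part 1 : I₁ s / log s → 1
  have hI1 : Tendsto (fun s => I₁ s / Real.log s) atTop (nhds 1) := by
    have hdecomp : ∀ s : ℝ, 0 < s → I₁ s = ∑ n ∈ Finset.range mB,
        (pB * Bcoef mB KB1 n * (∫ γ in Set.Ioi (0:ℝ),
            Real.log (1 + γ) * (γ ^ (mB - n - 1) * Real.exp (-γ / (c1 * s)) /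
              ((c1 * s) ^ ((mB - n - 1) + 1) * ((mB - n - 1).factorial : ℝ))) * G γ)
          + (1 - pB) * Bcoef mB KB2 n * (∫ γ in Set.Ioi (0:ℝ),
            Real.log (1 + γ) * (γ ^ (mB - n - 1) * Real.exp (-γ / (c2 * s)) /
              ((c2 * s) ^ ((mB - n - 1) + 1) * ((mB - n - 1).factorial : ℝ))) * G γ)) := by
      intro s hs
      have hb1 : (0:ℝ) < c1 * s := by positivity
      have hb2 : (0:ℝ) < c2 * s := by positivity
      have hpt : ∀ γ : ℝ, Real.log (1 + γ) * arsPDF pB mB KB1 KB2 (c1 * s) (c2 * s) γ * G γ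
          = ∑ n ∈ Finset.range mB,
            (pB * (Bcoef mB KB1 n * (Real.log (1 + γ) * (γ ^ (mB - n - 1) *
              Real.exp (-γ / (c1 * s)) / ((c1 * s) ^ ((mB - n - 1) + 1) *
                ((mB - n - 1).factorial : ℝ))) * G γ))
            + (1 - pB) * (Bcoef mB KB2 n * (Real.log (1 + γ) * (γ ^ (mB - n - 1) *
              Real.exp (-γ / (c2 * s)) / ((c2 * s) ^ ((mB - n - 1) + 1) *
                ((mB - n - 1).factorial : ℝ))) * G γ))) := by
        intro γ
        have e1 := rsPDF_mul_eq mB KB1 (c1 * s) G γ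
        have e2 := rsPDF_mul_eq mB KB2 (c2 * s) G γ
        have lhs : Real.log (1 + γ) * arsPDF pB mB KB1 KB2 (c1 * s) (c2 * s) γ * G γ
            = pB * (Real.log (1 + γ) * rsPDF mB KB1 (c1 * s) γ * G γ)
              + (1 - pB) * (Real.log (1 + γ) * rsPDF mB KB2 (c2 * s) γ * G γ) := by
          unfold arsPDF; ring
        rw [lhs, e1, e2, Finset.mul_sum, Finset.mul_sum, ← Finset.sum_add_distrib]
      have hint1 : ∀ n ∈ Finset.range mB, IntegrableOn (fun γ : ℝ =>
          pB * (Bcoef mB KB1 n * (Real.log (1 + γ) * (γ ^ (mB - n - 1) *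
            Real.exp (-γ / (c1 * s)) / ((c1 * s) ^ ((mB - n - 1) + 1) *
              ((mB - n - 1).factorial : ℝ))) * G γ))
          + (1 - pB) * (Bcoef mB KB2 n * (Real.log (1 + γ) * (γ ^ (mB - n - 1) *
            Real.exp (-γ / (c2 * s)) / ((c2 * s) ^ ((mB - n - 1) + 1) *
              ((mB - n - 1).factorial : ℝ))) * G γ))) (Set.Ioi 0) := by
        intro n _
        exact (((integrableOn_base hb1 (mB - n - 1) _ hGm hGabs).const_mul
            (Bcoef mB KB1 n)).const_mul pB).add
          (((integrableOn_base hb2 (mB - n - 1) _ hGm hGabs).const_mul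
            (Bcoef mB KB2 n)).const_mul (1 - pB))
      have hI1s : I₁ s = ∫ γ in Set.Ioi (0:ℝ), ∑ n ∈ Finset.range mB,
          (pB * (Bcoef mB KB1 n * (Real.log (1 + γ) * (γ ^ (mB - n - 1) *
            Real.exp (-γ / (c1 * s)) / ((c1 * s) ^ ((mB - n - 1) + 1) *
              ((mB - n - 1).factorial : ℝ))) * G γ))
          + (1 - pB) * (Bcoef mB KB2 n * (Real.log (1 + γ) * (γ ^ (mB - n - 1) *
            Real.exp (-γ / (c2 * s)) / ((c2 * s) ^ ((mB - n - 1) + 1) *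
              ((mB - n - 1).factorial : ℝ))) * G γ))) :=
        MeasureTheory.integral_congr_ae (Filter.Eventually.of_forall fun γ => hpt γ)
      rw [hI1s, MeasureTheory.integral_finset_sum _ hint1]
      refine Finset.sum_congr rfl fun n hn => ?_
      rw [MeasureTheory.integral_add
        (((integrableOn_base hb1 (mB - n - 1) _ hGm hGabs).const_mul
            (Bcoef mB KB1 n)).const_mul pB)
        (((integrableOn_base hb2 (mB - n - 1) _ hGm hGabs).const_mul
            (Bcoef mB KB2 n)).const_mul (1 - pB)),
        MeasureTheory.integral_const_mul, MeasureTheory.integral_const_mul,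
        MeasureTheory.integral_const_mul, MeasureTheory.integral_const_mul]
      ring
    have hterm : Tendsto (fun s : ℝ => ∑ n ∈ Finset.range mB,
        (pB * Bcoef mB KB1 n * ((∫ γ in Set.Ioi (0:ℝ),
            Real.log (1 + γ) * (γ ^ (mB - n - 1) * Real.exp (-γ / (c1 * s)) /
              ((c1 * s) ^ ((mB - n - 1) + 1) * ((mB - n - 1).factorial : ℝ))) * G γ)
              / Real.log s)
          + (1 - pB) * Bcoef mB KB2 n * ((∫ γ in Set.Ioi (0:ℝ),
            Real.log (1 + γ) * (γ ^ (mB - n - 1) * Real.exp (-γ / (c2 * s)) /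
              ((c2 * s) ^ ((mB - n - 1) + 1) * ((mB - n - 1).factorial : ℝ))) * G γ)
              / Real.log s)))
        atTop (nhds (∑ n ∈ Finset.range mB,
          (pB * Bcoef mB KB1 n * 1 + (1 - pB) * Bcoef mB KB2 n * 1))) := by
      refine tendsto_finset_sum _ fun n _ => ?_
      exact ((key_tendsto (mB - n - 1) hc1 hGm hG0 hG1 hGlim).const_mul
          (pB * Bcoef mB KB1 n)).add
        ((key_tendsto (mB - n - 1) hc2 hGm hG0 hG1 hGlim).const_mul
          ((1 - pB) * Bcoef mB KB2 n))
    have hsumval : ∑ n ∈ Finset.range mB,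
        (pB * Bcoef mB KB1 n * 1 + (1 - pB) * Bcoef mB KB2 n * 1) = 1 := by
      simp only [mul_one]
      rw [Finset.sum_add_distrib, ← Finset.mul_sum, ← Finset.mul_sum,
        sum_Bcoef hmB hKB1, sum_Bcoef hmB hKB2]
      ring
    rw [hsumval] at hterm
    refine Tendsto.congr' ?_ hterm
    filter_upwards [eventually_gt_atTop (0:ℝ)] with s hs
    rw [hdecomp s hs, Finset.sum_div]
    exact Finset.sum_congr rfl fun n _ => by ring
  -- part 2 : I₂ s / log s → 0 and I₃ / log s → 0
  have hI3lim : Tendsto (fun s : ℝ => I₃ / Real.log s) atTop (nhds 0) :=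
    tendsto_const_nhds.div_atTop Real.tendsto_log_atTop
  have hI3int : IntegrableOn (fun γ : ℝ =>
      Real.log (1 + γ) * arsPDF pE mE KE1 KE2 ρE1 ρE2 γ) (Set.Ioi 0) := by
    have := integrableOn_log_arsPDF (p := pE) (m := mE) (K₁ := KE1) (K₂ := KE2)
      hρE1 hρE2 (H := fun _ => (1:ℝ)) measurable_const
      (fun x _ => by norm_num)
    refine this.congr_fun (fun x _ => by simp only [mul_one]) measurableSet_Ioi
  have hI2lim : Tendsto (fun s : ℝ => I₂ s / Real.log s) atTop (nhds 0) := by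
    have hbnd : ∀ s : ℝ, 0 < s → I₂ s ≤ I₃ := by
      intro s hs
      have hb1 : (0:ℝ) < c1 * s := by positivity
      have hb2 : (0:ℝ) < c2 * s := by positivity
      refine setIntegral_mono_on ?_ ?_ measurableSet_Ioi ?_
      · exact integrableOn_log_arsPDF hρE1 hρE2
          (measurable_arsCDF pB mB KB1 KB2 (c1 * s) (c2 * s))
          (fun x hx => abs_le.2 ⟨by
              linarith [arsCDF_nonneg (m := mB) hpB0 hpB1 hKB1 hKB2 hb1 hb2 hx.le],
            arsCDF_le_one hmB hpB0 hpB1 hKB1 hKB2 hb1 hb2 hx.le⟩)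
      · exact hI3int
      · intro γ hγ
        have hγ0 : (0:ℝ) < γ := hγ
        have hnn : 0 ≤ Real.log (1 + γ) * arsPDF pE mE KE1 KE2 ρE1 ρE2 γ :=
          mul_nonneg (Real.log_nonneg (by linarith))
            (arsPDF_nonneg hpE0 hpE1 hKE1 hKE2 hρE1 hρE2 hγ0.le)
        exact mul_le_of_le_one_right hnn
          (arsCDF_le_one hmB hpB0 hpB1 hKB1 hKB2 hb1 hb2 hγ0.le)
    have hnn : ∀ s : ℝ, 0 < s → 0 ≤ I₂ s := by
      intro s hs
      have hb1 : (0:ℝ) < c1 * s := by positivity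
      have hb2 : (0:ℝ) < c2 * s := by positivity
      refine setIntegral_nonneg measurableSet_Ioi fun γ hγ => ?_
      have hγ0 : (0:ℝ) < γ := hγ
      exact mul_nonneg (mul_nonneg (Real.log_nonneg (by linarith))
        (arsPDF_nonneg hpE0 hpE1 hKE1 hKE2 hρE1 hρE2 hγ0.le))
        (arsCDF_nonneg (m := mB) hpB0 hpB1 hKB1 hKB2 hb1 hb2 hγ0.le)
    refine tendsto_of_tendsto_of_tendsto_of_le_of_le'
      (tendsto_const_nhds (x := (0:ℝ))) hI3lim ?_ ?_
    · filter_upwards [eventually_gt_atTop (1:ℝ)] with s hs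
      have hlogs : 0 < Real.log s := Real.log_pos hs
      exact div_nonneg (hnn s (by linarith)) hlogs.le
    · filter_upwards [eventually_gt_atTop (1:ℝ)] with s hs
      have hlogs : 0 < Real.log s := Real.log_pos hs
      exact div_le_div_of_nonneg_right (hbnd s (by linarith)) hlogs.le
  -- final assembly
  have hmain := ((hI1.add hI2lim).sub hI3lim).const_mul (Real.log 2)
  have hval : Real.log 2 * (1 + 0 - 0) = Real.log 2 := by ring
  rw [hval] at hmain
  refine Tendsto.congr' ?_ hmain
  filter_upwards [eventually_gt_atTop (1:ℝ)] with s hs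
  have hlogs : 0 < Real.log s := Real.log_pos hs
  have hlog2 : (0:ℝ) < Real.log 2 := Real.log_pos one_lt_two
  rw [Real.logb]
  field_simp
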